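/- arXiv:2005.08634 — 2 statements merged into one kernel-verified Lean document; each statement's English description precedes it below -/
import Mathlib

section
/- If Φ_1 and Φ_2 are switching equivalent T-gain graphs on a graph G with vertices v_1,…,v_n, then E_{Φ_1}(v_i) = E_{Φ_2}(v_i) for each i. -/
open Matrix BigOperators
open scoped Classical ComplexOrder

/-- A complex unit gain graph (`𝕋`-gain graph) on a finite vertex type `V`. -/
structure TGainGraph (V : Type*) [Fintype V] [DecidableEq V] where
  G : SimpleGraph V
  A : Matrix V V ℂ
  herm : A.IsHermitian
  unitGain : ∀ i j, G.Adj i j → ‖A i j‖ = 1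
  zeroGain : ∀ i j, ¬ G.Adj i j → A i j = 0

namespace TGainGraph

variable {V : Type*} [Fintype V] [DecidableEq V]

/-- The energy of a `𝕋`-gain graph: sum of absolute values of eigenvalues of `A(Φ)`. -/
noncomputable def energy (Φ : TGainGraph V) : ℝ :=
  ∑ i, |Φ.herm.eigenvalues i|

/-- `|A(Φ)| = (A(Φ) A(Φ)ᴴ)^{1/2}`. -/
noncomputable def absMatrix (Φ : TGainGraph V) : Matrix V V ℂ :=
  ((Matrix.posSemidef_self_mul_conjTranspose Φ.A).1.eigenvectorUnitary : Matrix V V ℂ) *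
    diagonal ((↑) ∘ (√·) ∘ (Matrix.posSemidef_self_mul_conjTranspose Φ.A).1.eigenvalues) *
    (star (Matrix.posSemidef_self_mul_conjTranspose Φ.A).1.eigenvectorUnitary : Matrix V V ℂ)

/-- Energy of a vertex: the `(i,i)` entry of `|A(Φ)|`. -/
noncomputable def vertexEnergy (Φ : TGainGraph V) (i : V) : ℝ :=
  (Φ.absMatrix i i).re

/-- Degree of a vertex in the underlying graph. -/
noncomputable def deg (Φ : TGainGraph V) (i : V) : ℕ := Φ.G.degree i

/-- Maximum vertex degree of the underlying graph. -/
noncomputable def maxDeg (Φ : TGainGraph V) : ℕ := Φ.G.maxDegree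

/-- Spectral radius of `A(Φ)`. -/
noncomputable def specRadius (Φ : TGainGraph V) : ℝ :=
  ⨆ i, |Φ.herm.eigenvalues i|

/-- Switching equivalence of two gain graphs on the same vertex set: same
underlying graph, and adjacency matrices conjugate by a diagonal unitary. -/
def SwitchEquiv (Φ₁ Φ₂ : TGainGraph V) : Prop :=
  Φ₁.G = Φ₂.G ∧ ∃ U : Matrix V V ℂ, U.IsDiag ∧ U ∈ Matrix.unitaryGroup V ℂ ∧
    Φ₁.A = U * Φ₂.A * Uᴴ

/-- `Φ` switches to the all-ones gain on its underlying graph,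
i.e. `Φ ∼ (G, 1)` (equivalently, `Φ` is balanced). -/
def SwitchesToOne (Φ : TGainGraph V) : Prop :=
  ∃ U : Matrix V V ℂ, U.IsDiag ∧ U ∈ Matrix.unitaryGroup V ℂ ∧
    Φ.A = U * (Φ.G.adjMatrix ℂ) * Uᴴ

/-- `Φ ∼ (K_{a,b}, 1)`: the underlying graph is (isomorphic to) the complete
bipartite graph `K_{a,b}` via some bijection `e`, and the gains switch to `1`. -/
def SwitchEquivToCompleteBipartite (Φ : TGainGraph V) (a b : ℕ) : Prop :=
  (∃ e : V ≃ (Fin a ⊕ Fin b), ∀ i j, Φ.G.Adj i j ↔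
      (completeBipartiteGraph (Fin a) (Fin b)).Adj (e i) (e j)) ∧
  SwitchesToOne Φ

/-- The gain of a walk: the product of the gains of its edges in order. -/
noncomputable def walkGain (Φ : TGainGraph V) {u v : V} (w : Φ.G.Walk u v) : ℂ :=
  (w.darts.map (fun d => Φ.A d.fst d.snd)).prod

/-- A gain graph is balanced if every cycle has gain `1`. -/
def Balanced (Φ : TGainGraph V) : Prop :=
  ∀ (u : V) (w : Φ.G.Walk u u), w.IsCycle → Φ.walkGain w = 1

/-- The restriction of a gain graph to a set of vertices. -/
noncomputable def restrict (Φ : TGainGraph V) (s : Set V) : TGainGraph s where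
  G := Φ.G.induce s
  A := Φ.A.submatrix (Subtype.val) (Subtype.val)
  herm := Φ.herm.submatrix _
  unitGain := fun i j h => Φ.unitGain i j h
  zeroGain := fun i j h => Φ.zeroGain i j h

/-- The vertex set of the connected component `c`. -/
def componentSet (Φ : TGainGraph V) (c : Φ.G.ConnectedComponent) : Set V :=
  {v | Φ.G.connectedComponentMk v = c}

/-- Every connected component of `Φ` is either an isolated vertex or a balanced
complete bipartite gain graph `(K_{k,k},1)` with a perfect matching. -/
def ComponentsBalancedCompleteBipartitePM (Φ : TGainGraph V) : Prop :=
  ∀ c : Φ.G.ConnectedComponent,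
    (∀ v ∈ Φ.componentSet c, ∀ w, ¬ Φ.G.Adj v w) ∨
    ∃ k : ℕ, 0 < k ∧
      (Φ.restrict (Φ.componentSet c)).SwitchEquivToCompleteBipartite k k

/-- The matching number of a graph. -/
noncomputable def matchingNumber (G : SimpleGraph V) : ℕ :=
  sSup {k | ∃ M : G.Subgraph, M.IsMatching ∧ M.edgeSet.ncard = k}

/-- The vertex cover number of a graph. -/
noncomputable def coverNumber (G : SimpleGraph V) : ℕ :=
  sInf {k | ∃ s : Finset V, s.card = k ∧ ∀ i j, G.Adj i j → i ∈ s ∨ j ∈ s}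

/-- The number of odd cycles of a graph (counted by their edge sets). -/
noncomputable def oddCycleCount (G : SimpleGraph V) : ℕ :=
  Set.ncard {s : Set (Sym2 V) | ∃ (u : V) (w : G.Walk u u),
    w.IsCycle ∧ Odd w.length ∧ s = {e | e ∈ w.edges}}

end TGainGraph

open TGainGraph in
lemma sqrt_conj_unitary {n : Type*} [Fintype n] [DecidableEq n]
    {M : Matrix n n ℂ} (hM : M.PosSemidef) (U : Matrix n n ℂ)
    (hU : U ∈ Matrix.unitaryGroup n ℂ)
    (h : (U * M * Uᴴ).PosSemidef) :
    cfc Real.sqrt (U * M * Uᴴ) = U * cfc Real.sqrt M * Uᴴ := by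
  have hM' : IsSelfAdjoint M := hM.1
  have h' : IsSelfAdjoint (U * M * Uᴴ) := h.1
  have hc : Continuous (fun x : Matrix n n ℂ => U * x * Uᴴ) := by fun_prop
  have key := StarAlgHomClass.map_cfc (S := ℂ)
    (Unitary.conjStarAlgAut ℂ (Matrix n n ℂ) ⟨U, hU⟩) Real.sqrt M
    (hφ := hc) (ha := hM') (hφa := h')
  simpa [Matrix.star_eq_conjTranspose] using key.symm

/-- Switching-equivalent gain graphs have the same vertex energies. -/
theorem vertexEnergy_eq_of_switchEquiv {V : Type*} [Fintype V] [DecidableEq V]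
    (Φ₁ Φ₂ : TGainGraph V) (h : Φ₁.SwitchEquiv Φ₂) :
    ∀ i, Φ₁.vertexEnergy i = Φ₂.vertexEnergy i := by
  obtain ⟨-, U, hdiag, hU, hA⟩ := h
  have hUU : Uᴴ * U = 1 := mem_unitaryGroup_iff'.mp hU
  have hM2 := Matrix.posSemidef_self_mul_conjTranspose Φ₂.A
  have habs : ∀ Φ : TGainGraph V, Φ.absMatrix = cfc Real.sqrt (Φ.A * Φ.Aᴴ) := by
    intro Φ
    rw [(Matrix.posSemidef_self_mul_conjTranspose Φ.A).1.cfc_eq]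
    simp [TGainGraph.absMatrix, Matrix.IsHermitian.cfc, Function.comp_def]
  have hprod : Φ₁.A * Φ₁.Aᴴ = U * (Φ₂.A * Φ₂.Aᴴ) * Uᴴ := by
    rw [hA]
    simp only [conjTranspose_mul, conjTranspose_conjTranspose]
    have e1 : U * Φ₂.A * Uᴴ * (U * (Φ₂.Aᴴ * Uᴴ))
        = U * Φ₂.A * (Uᴴ * U) * (Φ₂.Aᴴ * Uᴴ) := by noncomm_ring
    rw [e1, hUU]; noncomm_ring
  have hsqrt : Φ₁.absMatrix = U * cfc Real.sqrt (Φ₂.A * Φ₂.Aᴴ) * Uᴴ := by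
    rw [habs, hprod]
    exact sqrt_conj_unitary hM2 U hU (hprod ▸ Matrix.posSemidef_self_mul_conjTranspose Φ₁.A)
  intro i
  have hUi : ‖U i i‖ = 1 := by
    have h1 : (Uᴴ * U) i i = 1 := by rw [hUU]; simp
    rw [Matrix.mul_apply] at h1
    have : ∑ k, (Uᴴ) i k * U k i = (starRingEnd ℂ) (U i i) * U i i := by
      rw [Finset.sum_eq_single i]
      · simp [Matrix.conjTranspose_apply]
      · intro k _ hk
        simp [Matrix.conjTranspose_apply, hdiag hk]
      · simp
    rw [this] at h1
    have h2 := congrArg (‖·‖) h1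
    simp only [norm_mul, norm_one, Complex.norm_conj] at h2
    nlinarith [norm_nonneg (U i i)]
  unfold TGainGraph.vertexEnergy
  rw [hsqrt, habs Φ₂]
  have hentry : (U * cfc Real.sqrt (Φ₂.A * Φ₂.Aᴴ) * Uᴴ) i i = cfc Real.sqrt (Φ₂.A * Φ₂.Aᴴ) i i := by
    rw [Matrix.mul_apply]
    rw [Finset.sum_eq_single i]
    · rw [Matrix.mul_apply, Finset.sum_eq_single i]
      · rw [Matrix.conjTranspose_apply]
        have hone : U i i * star (U i i) = 1 := by
          rw [Complex.star_def, Complex.mul_conj, Complex.normSq_eq_norm_sq, hUi]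
          norm_num
        calc U i i * cfc Real.sqrt (Φ₂.A * Φ₂.Aᴴ) i i * star (U i i)
            = U i i * star (U i i) * cfc Real.sqrt (Φ₂.A * Φ₂.Aᴴ) i i := by ring
          _ = cfc Real.sqrt (Φ₂.A * Φ₂.Aᴴ) i i := by rw [hone, one_mul]
      · intro k _ hk
        rw [hdiag hk.symm, zero_mul]
      · simp
    · intro k _ hk
      simp [Matrix.conjTranspose_apply, hdiag (Ne.symm hk)]
    · simp
  rw [hentry]
end

section
/- If Φ = (K_{n,n}, φ) is any T-gain graph on the complete bipartite graph K_{n,n}, then E(Φ) ≥ E(K_{n,n}) = 2n, and equality holds if and only if Φ is switching equivalent to (K_{n,n}, 1). -/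
open Matrix BigOperators
open scoped Classical ComplexOrder

section AuxLemmas

open Sum

lemma conj_spec_pow {m : Type*} [Fintype m] [DecidableEq m]
    (U D : Matrix m m ℂ) (hU : U ∈ Matrix.unitaryGroup m ℂ) (k : ℕ) :
    (U * D * star U) ^ k = U * D ^ k * star U := by
  induction k with
  | zero =>
      simp [pow_zero, Matrix.mem_unitaryGroup_iff.mp hU]
  | succ k ih =>
      rw [pow_succ, ih, pow_succ]
      have h1 : star U * U = 1 := Matrix.mem_unitaryGroup_iff'.mp hU
      calc U * D ^ k * star U * (U * D * star U)
          = U * D ^ k * (star U * U) * D * star U := by noncomm_ring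
        _ = U * (D ^ k * D) * star U := by rw [h1]; noncomm_ring

lemma trace_pow_eq_sum_eigenvalues {m : Type*} [Fintype m] [DecidableEq m]
    {A : Matrix m m ℂ} (hA : A.IsHermitian) (k : ℕ) :
    (A ^ k).trace = ∑ i, (hA.eigenvalues i : ℂ) ^ k := by
  nth_rewrite 1 [hA.spectral_theorem]
  rw [Unitary.conjStarAlgAut_apply]
  rw [conj_spec_pow _ _ (hA.eigenvectorUnitary).2, Matrix.trace_mul_cycle,
    Matrix.mem_unitaryGroup_iff'.mp (hA.eigenvectorUnitary).2, one_mul,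
    Matrix.diagonal_pow, Matrix.trace_diagonal]
  simp [Function.comp]

lemma eigenvalue_abs_le {m : Type*} [Fintype m] [DecidableEq m]
    {A : Matrix m m ℂ} (hA : A.IsHermitian) (r : ℝ)
    (hr : ∀ x, ∑ y, ‖A x y‖ ≤ r) (i : m) :
    |hA.eigenvalues i| ≤ r := by
  have hv := hA.mulVec_eigenvectorBasis i
  set v : m → ℂ := ⇑(hA.eigenvectorBasis i) with hvdef
  have hvne : v ≠ 0 := by
    have := hA.eigenvectorBasis.orthonormal.ne_zero i
    intro h
    apply this
    ext y
    exact congrFun h y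
  obtain ⟨y0, hy0⟩ := Function.ne_iff.mp hvne
  have : Nonempty m := ⟨i⟩
  obtain ⟨x, -, hx⟩ := Finset.exists_max_image Finset.univ (fun y => ‖v y‖)
    ⟨y0, Finset.mem_univ y0⟩
  have hxpos : 0 < ‖v x‖ :=
    lt_of_lt_of_le (by simpa using hy0) (hx y0 (Finset.mem_univ _))
  have key : |hA.eigenvalues i| * ‖v x‖ ≤ r * ‖v x‖ := by
    have h1 : ‖(A *ᵥ v) x‖ = |hA.eigenvalues i| * ‖v x‖ := by
      rw [hv]
      simp [Pi.smul_apply, Complex.real_smul, norm_mul, Complex.norm_real, Real.norm_eq_abs]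
    have h2 : ‖(A *ᵥ v) x‖ ≤ r * ‖v x‖ := by
      calc ‖(A *ᵥ v) x‖ = ‖∑ y, A x y * v y‖ := by
            rfl
        _ ≤ ∑ y, ‖A x y * v y‖ := by
            exact norm_sum_le _ _
        _ = ∑ y, ‖A x y‖ * ‖v y‖ := by
            simp [norm_mul]
        _ ≤ ∑ y, ‖A x y‖ * ‖v x‖ := by
            apply Finset.sum_le_sum
            intro y _
            exact mul_le_mul_of_nonneg_left (hx y (Finset.mem_univ _)) (by positivity)
        _ = (∑ y, ‖A x y‖) * ‖v x‖ := by
            rw [Finset.sum_mul]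
        _ ≤ r * ‖v x‖ := by
            exact mul_le_mul_of_nonneg_right (hr x) (by positivity)
    linarith [h1 ▸ h2]
  exact le_of_mul_le_mul_right key hxpos

lemma eq_one_of_re_eq_one {z : ℂ} (h1 : ‖z‖ = 1) (h2 : z.re = 1) : z = 1 := by
  have hn : Complex.normSq z = 1 := by
    rw [← Complex.sq_norm, h1]; norm_num
  have hsq := Complex.normSq_apply z
  have him : z.im = 0 := by nlinarith
  exact Complex.ext h2 (by simp [him])

lemma all_eq_of_abs_sum {k : ℕ} (f : Fin k → ℂ)
    (h1 : ∀ c, ‖f c‖ = 1)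
    (hs : ‖∑ c, f c‖ = k) :
    ∀ c d, f c = f d := by
  have habs1 : ∀ c d : Fin k, ‖f c * (starRingEnd ℂ) (f d)‖ = 1 := by
    intro c d
    rw [norm_mul, Complex.norm_conj, h1 c, h1 d, mul_one]
  have hprod : ((Complex.normSq (∑ c, f c) : ℝ) : ℂ)
      = ∑ c, ∑ d, f c * (starRingEnd ℂ) (f d) := by
    rw [← Complex.mul_conj, map_sum, Finset.sum_mul_sum]
  have h0 : (k : ℝ) ^ 2 = ∑ c, ∑ d, (f c * (starRingEnd ℂ) (f d)).re := by
    have := congrArg Complex.re hprod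
    rw [Complex.ofReal_re, Complex.re_sum] at this
    simp only [Complex.re_sum] at this
    rw [← this, ← Complex.sq_norm, hs]
  have key : ∀ c d : Fin k, (f c * (starRingEnd ℂ) (f d)).re = 1 := by
    have hle : ∀ p ∈ (Finset.univ : Finset (Fin k × Fin k)),
        (f p.1 * (starRingEnd ℂ) (f p.2)).re ≤ 1 := by
      intro p _
      exact (Complex.re_le_norm _).trans (le_of_eq (habs1 p.1 p.2))
    have hsum : ∑ p : Fin k × Fin k, (f p.1 * (starRingEnd ℂ) (f p.2)).re
        = ∑ _p : Fin k × Fin k, (1 : ℝ) := by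
      rw [Fintype.sum_prod_type]
      simp only [Finset.sum_const, Finset.card_univ, Fintype.card_prod, Fintype.card_fin]
      rw [← h0]
      ring
    have := (Finset.sum_eq_sum_iff_of_le hle).mp hsum
    intro c d
    exact this (c, d) (Finset.mem_univ _)
  intro c d
  have h2 : f c * (starRingEnd ℂ) (f d) = 1 :=
    eq_one_of_re_eq_one (habs1 c d) (key c d)
  have hd : (starRingEnd ℂ) (f d) * f d = 1 := by
    have : Complex.normSq (f d) = 1 := by rw [← Complex.sq_norm, h1 d]; norm_num
    rw [mul_comm, Complex.mul_conj, this, Complex.ofReal_one]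
  calc f c = f c * ((starRingEnd ℂ) (f d) * f d) := by rw [hd, mul_one]
    _ = (f c * (starRingEnd ℂ) (f d)) * f d := by rw [mul_assoc]
    _ = f d := by rw [h2, one_mul]

lemma trace_mul_self_of_herm {m : Type*} [Fintype m]
    {B : Matrix m m ℂ} (hB : B.IsHermitian) :
    (B * B).trace = ((∑ x, ∑ y, Complex.normSq (B x y) : ℝ) : ℂ) := by
  rw [Matrix.trace]
  push_cast
  apply Finset.sum_congr rfl
  intro x _
  rw [Matrix.diag_apply, Matrix.mul_apply]
  apply Finset.sum_congr rfl
  intro y _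
  rw [← hB.apply y x, ← Complex.mul_conj]
  rfl

end AuxLemmas


section PhiLemmas

open Sum

variable {n : ℕ} (Φ : TGainGraph (Fin n ⊕ Fin n))
  (hG : Φ.G = completeBipartiteGraph (Fin n) (Fin n))

include hG

lemma A_ll (a b : Fin n) : Φ.A (inl a) (inl b) = 0 :=
  Φ.zeroGain _ _ (by rw [hG]; simp)

lemma A_rr (c d : Fin n) : Φ.A (inr c) (inr d) = 0 :=
  Φ.zeroGain _ _ (by rw [hG]; simp)

lemma A_abs (a c : Fin n) : ‖Φ.A (inl a) (inr c)‖ = 1 :=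
  Φ.unitGain _ _ (by rw [hG]; simp)

omit hG in
lemma A_rl (c a : Fin n) :
    Φ.A (inr c) (inl a) = (starRingEnd ℂ) (Φ.A (inl a) (inr c)) := by
  rw [← Φ.herm.apply (inr c) (inl a)]
  rfl

lemma A_abs' (c a : Fin n) : ‖Φ.A (inr c) (inl a)‖ = 1 := by
  rw [A_rl Φ, Complex.norm_conj, A_abs Φ hG]

lemma A_rowsum (x : Fin n ⊕ Fin n) : ∑ y, ‖Φ.A x y‖ = n := by
  cases x with
  | inl a =>
      rw [Fintype.sum_sum_type]
      simp [A_ll Φ hG, A_abs Φ hG]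
  | inr c =>
      rw [Fintype.sum_sum_type]
      simp [A_rr Φ hG, A_abs' Φ hG]

lemma A_normsum (x : Fin n ⊕ Fin n) : ∑ y, Complex.normSq (Φ.A x y) = n := by
  have : ∀ y, Complex.normSq (Φ.A x y) = ‖Φ.A x y‖ * ‖Φ.A x y‖ := by
    intro y
    rw [Complex.normSq_eq_norm_sq, sq]
  rw [Finset.sum_congr rfl (fun y _ => this y)]
  cases x with
  | inl a =>
      rw [Fintype.sum_sum_type]
      simp [A_ll Φ hG, A_abs Φ hG]
  | inr c =>
      rw [Fintype.sum_sum_type]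
      simp [A_rr Φ hG, A_abs' Φ hG]

lemma eig_sum : ∑ i, Φ.herm.eigenvalues i = 0 := by
  have t := trace_pow_eq_sum_eigenvalues Φ.herm 1
  simp only [pow_one] at t
  have h0 : Φ.A.trace = 0 := by
    rw [Matrix.trace, Fintype.sum_sum_type]
    simp [Matrix.diag_apply, A_ll Φ hG, A_rr Φ hG]
  rw [h0] at t
  exact_mod_cast t.symm

lemma eig_sq_sum : ∑ i, (Φ.herm.eigenvalues i) ^ 2 = 2 * (n : ℝ) ^ 2 := by
  have t := trace_pow_eq_sum_eigenvalues Φ.herm 2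
  rw [pow_two, trace_mul_self_of_herm Φ.herm] at t
  have hblocks : ∑ x, ∑ y, Complex.normSq (Φ.A x y) = 2 * (n : ℝ) ^ 2 := by
    rw [Finset.sum_congr rfl (fun x _ => A_normsum Φ hG x)]
    simp [Finset.sum_const, Finset.card_univ]
    ring
  rw [hblocks] at t
  exact_mod_cast t.symm

lemma A2_ll (a b : Fin n) : (Φ.A ^ 2) (inl a) (inl b)
    = ∑ c, Φ.A (inl a) (inr c) * (starRingEnd ℂ) (Φ.A (inl b) (inr c)) := by
  rw [pow_two, Matrix.mul_apply, Fintype.sum_sum_type]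
  simp only [A_ll Φ hG, zero_mul, Finset.sum_const_zero, zero_add]
  exact Finset.sum_congr rfl (fun c _ => by rw [A_rl Φ])

lemma A2_rr (c d : Fin n) : (Φ.A ^ 2) (inr c) (inr d)
    = ∑ a, (starRingEnd ℂ) (Φ.A (inl a) (inr c)) * Φ.A (inl a) (inr d) := by
  rw [pow_two, Matrix.mul_apply, Fintype.sum_sum_type]
  simp only [A_rr Φ hG, mul_zero, Finset.sum_const_zero, add_zero]
  exact Finset.sum_congr rfl (fun a _ => by rw [A_rl Φ])

lemma A2_lr (a c : Fin n) : (Φ.A ^ 2) (inl a) (inr c) = 0 := by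
  rw [pow_two, Matrix.mul_apply, Fintype.sum_sum_type]
  simp [A_ll Φ hG, A_rr Φ hG]

lemma A2_rl (c a : Fin n) : (Φ.A ^ 2) (inr c) (inl a) = 0 := by
  rw [pow_two, Matrix.mul_apply, Fintype.sum_sum_type]
  simp [A_ll Φ hG, A_rr Φ hG]

lemma eig_quart_sum : ∑ i, (Φ.herm.eigenvalues i) ^ 4
    = (∑ a, ∑ b, Complex.normSq ((Φ.A ^ 2) (inl a) (inl b)))
      + (∑ c, ∑ d, Complex.normSq ((Φ.A ^ 2) (inr c) (inr d))) := by
  have t := trace_pow_eq_sum_eigenvalues Φ.herm 4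
  have h4 : Φ.A ^ 4 = (Φ.A ^ 2) * (Φ.A ^ 2) := by rw [← pow_add]
  rw [h4, trace_mul_self_of_herm (Φ.herm.pow 2)] at t
  have hblocks : ∑ x, ∑ y, Complex.normSq ((Φ.A ^ 2) x y)
      = (∑ a, ∑ b, Complex.normSq ((Φ.A ^ 2) (inl a) (inl b)))
        + (∑ c, ∑ d, Complex.normSq ((Φ.A ^ 2) (inr c) (inr d))) := by
    rw [Fintype.sum_sum_type]
    congr 1
    · exact Finset.sum_congr rfl (fun a _ => by
        rw [Fintype.sum_sum_type]
        simp [A2_lr Φ hG])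
    · exact Finset.sum_congr rfl (fun c _ => by
        rw [Fintype.sum_sum_type]
        simp [A2_rl Φ hG])
  rw [hblocks] at t
  exact_mod_cast t.symm

lemma A2_ll_abs_le (a b : Fin n) : ‖(Φ.A ^ 2) (inl a) (inl b)‖ ≤ n := by
  rw [A2_ll Φ hG]
  calc ‖∑ c, Φ.A (inl a) (inr c) * (starRingEnd ℂ) (Φ.A (inl b) (inr c))‖
      ≤ ∑ c, ‖Φ.A (inl a) (inr c) * (starRingEnd ℂ) (Φ.A (inl b) (inr c))‖ :=
        norm_sum_le _ _
    _ = ∑ _c : Fin n, (1 : ℝ) := Finset.sum_congr rfl (fun c _ => by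
        rw [norm_mul, Complex.norm_conj, A_abs Φ hG, A_abs Φ hG, mul_one])
    _ = n := by simp

lemma A2_rr_abs_le (c d : Fin n) : ‖(Φ.A ^ 2) (inr c) (inr d)‖ ≤ n := by
  rw [A2_rr Φ hG]
  calc ‖∑ a, (starRingEnd ℂ) (Φ.A (inl a) (inr c)) * Φ.A (inl a) (inr d)‖
      ≤ ∑ a, ‖(starRingEnd ℂ) (Φ.A (inl a) (inr c)) * Φ.A (inl a) (inr d)‖ :=
        norm_sum_le _ _
    _ = ∑ _a : Fin n, (1 : ℝ) := Finset.sum_congr rfl (fun a _ => by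
        rw [norm_mul, Complex.norm_conj, A_abs Φ hG, A_abs Φ hG, mul_one])
    _ = n := by simp


omit hG in
lemma diag_conj_entry {m : Type*} [Fintype m] [DecidableEq m]
    (Mx : Matrix m m ℂ) (dd : m → ℂ) (x y : m) :
    (Matrix.diagonal dd * Mx * (Matrix.diagonal dd)ᴴ) x y
      = dd x * Mx x y * (starRingEnd ℂ) (dd y) := by
  rw [Matrix.diagonal_conjTranspose, Matrix.mul_diagonal, Matrix.diagonal_mul, Pi.star_apply]
  simp [Complex.star_def]

omit hG in
lemma diag_unitary_of_abs_one {m : Type*} [Fintype m] [DecidableEq m]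
    (dd : m → ℂ) (h : ∀ i, ‖dd i‖ = 1) :
    Matrix.diagonal dd ∈ Matrix.unitaryGroup m ℂ := by
  rw [Matrix.mem_unitaryGroup_iff, Matrix.star_eq_conjTranspose,
    Matrix.diagonal_conjTranspose, Matrix.diagonal_mul_diagonal]
  have heq : (fun i => dd i * star dd i) = fun _ => (1 : ℂ) := by
    funext i
    rw [Pi.star_apply, Complex.star_def, Complex.mul_conj]
    rw [show Complex.normSq (dd i) = 1 by rw [← Complex.sq_norm, h i]; norm_num]
    exact Complex.ofReal_one
  rw [show (fun i => dd i * star dd i) = fun _ => (1:ℂ) from heq, Matrix.diagonal_one]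

end PhiLemmas

open Sum in
open TGainGraph in
/-- For any gain graph on `K_{n,n}`, `E(Φ) ≥ E(K_{n,n}) = 2n`, with equality iff
`Φ ∼ (K_{n,n}, 1)`. -/
theorem energy_completeBipartite_ge {n : ℕ}
    (Φ : TGainGraph (Fin n ⊕ Fin n))
    (hG : Φ.G = completeBipartiteGraph (Fin n) (Fin n)) :
    2 * (n : ℝ) ≤ Φ.energy ∧ (Φ.energy = 2 * (n : ℝ) ↔ Φ.SwitchesToOne) := by
  classical
  set e : Fin n ⊕ Fin n → ℝ := Φ.herm.eigenvalues with hedef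
  have hEdef : Φ.energy = ∑ i, |e i| := rfl
  have hF3 : ∀ i, |e i| ≤ n := fun i =>
    eigenvalue_abs_le Φ.herm n (fun x => le_of_eq (A_rowsum Φ hG x)) i
  have he1 : ∑ i, e i = 0 := eig_sum Φ hG
  have he2 : ∑ i, (e i) ^ 2 = 2 * (n : ℝ) ^ 2 := eig_sq_sum Φ hG
  -- Part 1 : lower bound
  have hlow : 2 * (n : ℝ) ≤ Φ.energy := by
    have hx0 : ∀ i, (0:ℝ) ≤ max (e i) 0 := fun i => le_max_right _ _
    have hy0 : ∀ i, (0:ℝ) ≤ max (-(e i)) 0 := fun i => le_max_right _ _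
    have hsub : ∀ i, max (e i) 0 - max (-(e i)) 0 = e i := by
      intro i
      rcases le_total 0 (e i) with h | h
      · rw [max_eq_left h, max_eq_right (neg_nonpos.mpr h), sub_zero]
      · rw [max_eq_right h, max_eq_left (neg_nonneg.mpr h), zero_sub, neg_neg]
    have hadd : ∀ i, max (e i) 0 + max (-(e i)) 0 = |e i| := by
      intro i
      rcases le_total 0 (e i) with h | h
      · rw [max_eq_left h, max_eq_right (neg_nonpos.mpr h), add_zero, abs_of_nonneg h]
      · rw [max_eq_right h, max_eq_left (neg_nonneg.mpr h), zero_add, abs_of_nonpos h]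
    have hsq : ∀ i, (max (e i) 0) ^ 2 + (max (-(e i)) 0) ^ 2 = (e i) ^ 2 := by
      intro i
      rcases le_total 0 (e i) with h | h
      · rw [max_eq_left h, max_eq_right (neg_nonpos.mpr h)]; ring
      · rw [max_eq_right h, max_eq_left (neg_nonneg.mpr h)]; ring
    set P : ℝ := ∑ i, max (e i) 0 with hP
    set N : ℝ := ∑ i, max (-(e i)) 0 with hN
    have hPN : P = N := by
      have h1 : P - N = ∑ i, e i := by
        rw [hP, hN, ← Finset.sum_sub_distrib]
        exact Finset.sum_congr rfl (fun i _ => hsub i)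
      rw [he1] at h1
      linarith
    have hP0 : 0 ≤ P := Finset.sum_nonneg (fun i _ => hx0 i)
    have hxP : ∑ i, (max (e i) 0) ^ 2 ≤ P ^ 2 :=
      Finset.sum_sq_le_sq_sum_of_nonneg (fun i _ => hx0 i)
    have hyN : ∑ i, (max (-(e i)) 0) ^ 2 ≤ N ^ 2 :=
      Finset.sum_sq_le_sq_sum_of_nonneg (fun i _ => hy0 i)
    have hsum_sq : ∑ i, (max (e i) 0) ^ 2 + ∑ i, (max (-(e i)) 0) ^ 2 = 2 * (n:ℝ) ^ 2 := by
      rw [← Finset.sum_add_distrib, Finset.sum_congr rfl (fun i _ => hsq i), he2]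
    have hn2P : (n : ℝ) ^ 2 ≤ P ^ 2 := by nlinarith [hPN, hxP, hyN, hsum_sq]
    have hnP : (n : ℝ) ≤ P := le_of_pow_le_pow_left₀ two_ne_zero hP0 hn2P
    have hE2P : Φ.energy = 2 * P := by
      rw [hEdef, Finset.sum_congr rfl (fun i _ => (hadd i).symm), Finset.sum_add_distrib,
        ← hP, ← hN, ← hPN]
      ring
    rw [hE2P]
    linarith
  refine ⟨hlow, ?_, ?_⟩
  · -- equality implies SwitchesToOne
    intro hE
    rcases Nat.eq_zero_or_pos n with hn | hn
    · subst hn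
      refine ⟨1, Matrix.isDiag_one, one_mem _, ?_⟩
      ext x y
      cases x with
      | inl a => exact a.elim0
      | inr a => exact a.elim0
    · -- n > 0
      have hnR : (0:ℝ) < n := by exact_mod_cast hn
      -- termwise equality e i ^ 2 = n * |e i|
      have hterm : ∀ i ∈ (Finset.univ : Finset (Fin n ⊕ Fin n)), (e i) ^ 2 ≤ n * |e i| := by
        intro i _
        have h1 : (e i) ^ 2 = |e i| * |e i| := by rw [← sq_abs]; ring
        rw [h1]
        exact mul_le_mul_of_nonneg_right (hF3 i) (abs_nonneg _)
      have hsumeq : ∑ i, (e i) ^ 2 = ∑ i, (n:ℝ) * |e i| := by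
        rw [he2, ← Finset.mul_sum, ← hEdef, hE]
        ring
      have heq := (Finset.sum_eq_sum_iff_of_le hterm).mp hsumeq
      have hq : ∑ i, (e i) ^ 4 = 2 * (n:ℝ) ^ 4 := by
        have h4 : ∀ i, (e i) ^ 4 = (n:ℝ) ^ 2 * (e i) ^ 2 := by
          intro i
          have h := heq i (Finset.mem_univ i)
          calc (e i) ^ 4 = ((e i) ^ 2) ^ 2 := by ring
            _ = ((n:ℝ) * |e i|) ^ 2 := by rw [h]
            _ = (n:ℝ) ^ 2 * (e i) ^ 2 := by rw [mul_pow, sq_abs]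
        rw [Finset.sum_congr rfl (fun i _ => h4 i), ← Finset.mul_sum, he2]
        ring
      -- block sums
      have hS := (eig_quart_sum Φ hG).symm.trans hq
      have hS1le : ∑ a, ∑ b, Complex.normSq ((Φ.A ^ 2) (inl a) (inl b)) ≤ (n:ℝ) ^ 4 := by
        calc ∑ a, ∑ b, Complex.normSq ((Φ.A ^ 2) (inl a) (inl b))
            ≤ ∑ _a : Fin n, ∑ _b : Fin n, (n:ℝ) ^ 2 := by
              apply Finset.sum_le_sum
              intro a _
              apply Finset.sum_le_sum
              intro b _
              rw [← Complex.sq_norm]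
              exact pow_le_pow_left₀ (norm_nonneg _) (A2_ll_abs_le Φ hG a b) 2
          _ = (n:ℝ) ^ 4 := by
              simp [Finset.sum_const, Finset.card_univ]
              ring
      have hS2le : ∑ c, ∑ d, Complex.normSq ((Φ.A ^ 2) (inr c) (inr d)) ≤ (n:ℝ) ^ 4 := by
        calc ∑ c, ∑ d, Complex.normSq ((Φ.A ^ 2) (inr c) (inr d))
            ≤ ∑ _c : Fin n, ∑ _d : Fin n, (n:ℝ) ^ 2 := by
              apply Finset.sum_le_sum
              intro c _
              apply Finset.sum_le_sum
              intro d _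
              rw [← Complex.sq_norm]
              exact pow_le_pow_left₀ (norm_nonneg _) (A2_rr_abs_le Φ hG c d) 2
          _ = (n:ℝ) ^ 4 := by
              simp [Finset.sum_const, Finset.card_univ]
              ring
      have hS1 : ∑ a, ∑ b, Complex.normSq ((Φ.A ^ 2) (inl a) (inl b)) = (n:ℝ) ^ 4 := by
        linarith
      -- entrywise equality on the left block
      have hentry : ∀ a b : Fin n, Complex.normSq ((Φ.A ^ 2) (inl a) (inl b)) = (n:ℝ) ^ 2 := by
        have hle : ∀ p ∈ (Finset.univ : Finset (Fin n × Fin n)),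
            Complex.normSq ((Φ.A ^ 2) (inl p.1) (inl p.2)) ≤ (n:ℝ) ^ 2 := by
          intro p _
          rw [← Complex.sq_norm]
          exact pow_le_pow_left₀ (norm_nonneg _) (A2_ll_abs_le Φ hG p.1 p.2) 2
        have hsum : ∑ p : Fin n × Fin n, Complex.normSq ((Φ.A ^ 2) (inl p.1) (inl p.2))
            = ∑ _p : Fin n × Fin n, (n:ℝ) ^ 2 := by
          rw [Fintype.sum_prod_type, hS1]
          simp [Finset.sum_const, Finset.card_univ]
          ring
        have := (Finset.sum_eq_sum_iff_of_le hle).mp hsum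
        intro a b
        exact this (a, b) (Finset.mem_univ _)
      have habsM : ∀ a b : Fin n, ‖(Φ.A ^ 2) (inl a) (inl b)‖ = n := by
        intro a b
        rw [Complex.norm_def, hentry a b]
        rw [show ((n:ℝ) ^ 2) = (n:ℝ) * (n:ℝ) by ring]
        exact Real.sqrt_mul_self (le_of_lt hnR)
      set z0 : Fin n := ⟨0, hn⟩ with hz0
      -- all products equal
      have hall : ∀ a c : Fin n, Φ.A (inl a) (inr c) * (starRingEnd ℂ) (Φ.A (inl z0) (inr c))
          = Φ.A (inl a) (inr z0) * (starRingEnd ℂ) (Φ.A (inl z0) (inr z0)) := by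
        intro a c
        refine all_eq_of_abs_sum
          (fun c => Φ.A (inl a) (inr c) * (starRingEnd ℂ) (Φ.A (inl z0) (inr c))) ?_ ?_ c z0
        · intro c'
          rw [norm_mul, Complex.norm_conj, A_abs Φ hG, A_abs Φ hG, mul_one]
        · rw [← A2_ll Φ hG a z0]
          exact habsM a z0
      have hB : ∀ a c : Fin n, Φ.A (inl a) (inr c)
          = (Φ.A (inl a) (inr z0) * (starRingEnd ℂ) (Φ.A (inl z0) (inr z0)))
            * Φ.A (inl z0) (inr c) := by
        intro a c
        have hc : (starRingEnd ℂ) (Φ.A (inl z0) (inr c)) * Φ.A (inl z0) (inr c) = 1 := by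
          rw [mul_comm, Complex.mul_conj]
          rw [show Complex.normSq (Φ.A (inl z0) (inr c)) = 1 by
            rw [← Complex.sq_norm, A_abs Φ hG]; norm_num]
          exact Complex.ofReal_one
        calc Φ.A (inl a) (inr c)
            = Φ.A (inl a) (inr c) * ((starRingEnd ℂ) (Φ.A (inl z0) (inr c))
                * Φ.A (inl z0) (inr c)) := by rw [hc, mul_one]
          _ = (Φ.A (inl a) (inr c) * (starRingEnd ℂ) (Φ.A (inl z0) (inr c)))
                * Φ.A (inl z0) (inr c) := by ring
          _ = (Φ.A (inl a) (inr z0) * (starRingEnd ℂ) (Φ.A (inl z0) (inr z0)))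
                * Φ.A (inl z0) (inr c) := by rw [hall a c]
      -- the switching function
      set dv : Fin n ⊕ Fin n → ℂ := Sum.elim
        (fun a => Φ.A (inl a) (inr z0) * (starRingEnd ℂ) (Φ.A (inl z0) (inr z0)))
        (fun c => (starRingEnd ℂ) (Φ.A (inl z0) (inr c))) with hdv
      have hdabs : ∀ i, ‖dv i‖ = 1 := by
        intro i
        cases i with
        | inl a =>
            simp only [hdv, Sum.elim_inl]
            rw [norm_mul, Complex.norm_conj, A_abs Φ hG, A_abs Φ hG, mul_one]
        | inr c =>
            simp only [hdv, Sum.elim_inr]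
            rw [Complex.norm_conj, A_abs Φ hG]
      refine ⟨Matrix.diagonal dv, Matrix.isDiag_diagonal dv, diag_unitary_of_abs_one dv hdabs, ?_⟩
      ext x y
      rw [diag_conj_entry]
      cases x with
      | inl a =>
          cases y with
          | inl b =>
              rw [A_ll Φ hG]
              rw [show (Φ.G.adjMatrix ℂ) (inl a) (inl b) = 0 by
                rw [SimpleGraph.adjMatrix_apply, if_neg]; rw [hG]; simp]
              ring
          | inr c =>
              rw [show (Φ.G.adjMatrix ℂ) (inl a) (inr c) = 1 by
                rw [SimpleGraph.adjMatrix_apply, if_pos]; rw [hG]; simp]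
              simp only [hdv, Sum.elim_inl, Sum.elim_inr, Complex.conj_conj, mul_one]
              exact hB a c
      | inr c =>
          cases y with
          | inl a =>
              rw [show (Φ.G.adjMatrix ℂ) (inr c) (inl a) = 1 by
                rw [SimpleGraph.adjMatrix_apply, if_pos]; rw [hG]; simp]
              simp only [hdv, Sum.elim_inl, Sum.elim_inr, mul_one]
              rw [A_rl Φ, hB a c]
              rw [_root_.map_mul, _root_.map_mul, Complex.conj_conj]
              ring
          | inr d =>
              rw [A_rr Φ hG]
              rw [show (Φ.G.adjMatrix ℂ) (inr c) (inr d) = 0 by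
                rw [SimpleGraph.adjMatrix_apply, if_neg]; rw [hG]; simp]
              ring
  · -- SwitchesToOne implies equality
    intro hS
    rcases Nat.eq_zero_or_pos n with hn | hn
    · subst hn
      rw [hEdef]
      simp
    · have hnR : (0:ℝ) < n := by exact_mod_cast hn
      obtain ⟨U, hUdiag, hUunit, hAeq⟩ := hS
      set d : Fin n ⊕ Fin n → ℂ := fun i => U i i with hd
      have hU' : U = Matrix.diagonal d := (hUdiag.diagonal_diag).symm
      have hd1 : ∀ i, Complex.normSq (d i) = 1 := by
        intro i
        have h1 : U * Uᴴ = 1 := by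
          have := Matrix.mem_unitaryGroup_iff.mp hUunit
          rwa [Matrix.star_eq_conjTranspose] at this
        have h2 := congrFun (congrFun h1 i) i
        rw [Matrix.mul_apply] at h2
        have h3 : ∑ j, U i j * (starRingEnd ℂ) (U i j) = 1 := by
          simpa [Matrix.conjTranspose_apply, Matrix.one_apply, Complex.star_def] using h2
        rw [Finset.sum_eq_single i (fun j _ hj => by
          rw [hUdiag (Ne.symm hj), zero_mul]) (fun h => absurd (Finset.mem_univ i) h)] at h3
        rw [Complex.mul_conj] at h3
        exact_mod_cast h3
      have hent : ∀ x y, Φ.A x y = d x * (Φ.G.adjMatrix ℂ) x y * (starRingEnd ℂ) (d y) := by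
        intro x y
        rw [hAeq, hU', diag_conj_entry]
      have hBent : ∀ a c : Fin n, Φ.A (inl a) (inr c)
          = d (inl a) * (starRingEnd ℂ) (d (inr c)) := by
        intro a c
        rw [hent]
        rw [show (Φ.G.adjMatrix ℂ) (inl a) (inr c) = 1 by
          rw [SimpleGraph.adjMatrix_apply, if_pos]; rw [hG]; simp]
        ring
      -- block entries have normSq n^2
      have hM : ∀ a b : Fin n, Complex.normSq ((Φ.A ^ 2) (inl a) (inl b)) = (n:ℝ) ^ 2 := by
        intro a b
        rw [A2_ll Φ hG]
        have hterm : ∀ c : Fin n, Φ.A (inl a) (inr c) * (starRingEnd ℂ) (Φ.A (inl b) (inr c))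
            = d (inl a) * (starRingEnd ℂ) (d (inl b)) := by
          intro c
          rw [hBent, hBent, _root_.map_mul, Complex.conj_conj]
          calc d (inl a) * (starRingEnd ℂ) (d (inr c))
              * ((starRingEnd ℂ) (d (inl b)) * d (inr c))
              = d (inl a) * (starRingEnd ℂ) (d (inl b))
                * ((starRingEnd ℂ) (d (inr c)) * d (inr c)) := by ring
            _ = d (inl a) * (starRingEnd ℂ) (d (inl b)) := by
                rw [mul_comm ((starRingEnd ℂ) (d (inr c))) (d (inr c)), Complex.mul_conj,
                  hd1, Complex.ofReal_one, mul_one]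
        rw [Finset.sum_congr rfl (fun c _ => hterm c), Finset.sum_const, Finset.card_univ,
          Fintype.card_fin, nsmul_eq_mul, Complex.normSq_mul, Complex.normSq_mul,
          Complex.normSq_conj, hd1, hd1]
        rw [show Complex.normSq ((n:ℕ):ℂ) = (n:ℝ)^2 by
          rw [← Complex.sq_norm]; simp]
        ring
      have hM' : ∀ c dd : Fin n, Complex.normSq ((Φ.A ^ 2) (inr c) (inr dd)) = (n:ℝ) ^ 2 := by
        intro c dd
        rw [A2_rr Φ hG]
        have hterm : ∀ a : Fin n, (starRingEnd ℂ) (Φ.A (inl a) (inr c)) * Φ.A (inl a) (inr dd)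
            = d (inr c) * (starRingEnd ℂ) (d (inr dd)) := by
          intro a
          rw [hBent, hBent, _root_.map_mul, Complex.conj_conj]
          calc (starRingEnd ℂ) (d (inl a)) * d (inr c)
              * (d (inl a) * (starRingEnd ℂ) (d (inr dd)))
              = d (inr c) * (starRingEnd ℂ) (d (inr dd))
                * ((starRingEnd ℂ) (d (inl a)) * d (inl a)) := by ring
            _ = d (inr c) * (starRingEnd ℂ) (d (inr dd)) := by
                rw [mul_comm ((starRingEnd ℂ) (d (inl a))) (d (inl a)), Complex.mul_conj,
                  hd1, Complex.ofReal_one, mul_one]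
        rw [Finset.sum_congr rfl (fun a _ => hterm a), Finset.sum_const, Finset.card_univ,
          Fintype.card_fin, nsmul_eq_mul, Complex.normSq_mul, Complex.normSq_mul,
          Complex.normSq_conj, hd1, hd1]
        rw [show Complex.normSq ((n:ℕ):ℂ) = (n:ℝ)^2 by
          rw [← Complex.sq_norm]; simp]
        ring
      -- fourth moment equals 2 n^4
      have hq : ∑ i, (e i) ^ 4 = 2 * (n:ℝ) ^ 4 := by
        rw [eig_quart_sum Φ hG]
        rw [Finset.sum_congr rfl (fun a _ => Finset.sum_congr rfl (fun b _ => hM a b)),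
          Finset.sum_congr rfl (fun c _ => Finset.sum_congr rfl (fun dd _ => hM' c dd))]
        simp [Finset.sum_const, Finset.card_univ]
        ring
      -- termwise e^4 ≤ n^2 e^2 with equal sums
      have hterm : ∀ i ∈ (Finset.univ : Finset (Fin n ⊕ Fin n)),
          (e i) ^ 4 ≤ (n:ℝ) ^ 2 * (e i) ^ 2 := by
        intro i _
        have h1 : (e i) ^ 2 ≤ (n:ℝ) ^ 2 := by
          rw [← sq_abs]
          exact pow_le_pow_left₀ (abs_nonneg _) (hF3 i) 2
        have h2 : (e i) ^ 4 = (e i) ^ 2 * (e i) ^ 2 := by ring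
        rw [h2]
        exact mul_le_mul_of_nonneg_right h1 (sq_nonneg _)
      have hsumeq : ∑ i, (e i) ^ 4 = ∑ i, (n:ℝ) ^ 2 * (e i) ^ 2 := by
        rw [hq, ← Finset.mul_sum, he2]
        ring
      have heq := (Finset.sum_eq_sum_iff_of_le hterm).mp hsumeq
      have habs : ∀ i, (n:ℝ) * |e i| = (e i) ^ 2 := by
        intro i
        have h := heq i (Finset.mem_univ i)
        have h0 : (e i) ^ 2 * ((e i) ^ 2 - (n:ℝ) ^ 2) = 0 := by nlinarith [h]
        rcases mul_eq_zero.mp h0 with h1 | h1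
        · have hz : e i = 0 := by
            have := sq_eq_zero_iff.mp h1
            exact this
          rw [hz]
          simp
        · have h2 : (e i) ^ 2 = (n:ℝ) ^ 2 := by linarith
          have habs2 : |e i| = n := by
            have hsq : |e i| ^ 2 = (n:ℝ) ^ 2 := by rw [sq_abs]; exact h2
            nlinarith [abs_nonneg (e i), hF3 i]
          rw [habs2, h2]
          ring
      have hfin : (n:ℝ) * ∑ i, |e i| = (n:ℝ) * (2 * n) := by
        rw [Finset.mul_sum, Finset.sum_congr rfl (fun i _ => habs i), he2]
        ring
      rw [hEdef]
      have := mul_left_cancel₀ (ne_of_gt hnR) hfin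
      linarith [this]
end
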